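/- For the Lévy–Prokhorov metric q on P(S), q(P,Q) equals the infimum over all couplings μ of P and Q of inf{ε > 0 : μ{(x,y) : d(x,y) ≥ ε} ≤ ε}. -/

import Mathlib

open MeasureTheory Filter Topology Set
open scoped ENNReal NNReal

/-- The Ky Fan distance between two `S`-valued random variables on `(Ω, P)`:
`inf {ε > 0 : P{ω : d(X ω, Y ω) ≥ ε} ≤ ε}`. -/
noncomputable def kyFanDist {Ω S : Type*} [MeasurableSpace Ω] [PseudoMetricSpace S]
    (P : Measure Ω) (X Y : Ω → S) : ℝ :=
  sInf {ε : ℝ | 0 < ε ∧ (P {ω | ε ≤ dist (X ω) (Y ω)}).toReal ≤ ε}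

/-- A measure is nonatomic if every set of positive measure contains a measurable
subset of strictly smaller positive measure. -/
def Nonatomic {Ω : Type*} [MeasurableSpace Ω] (P : Measure Ω) : Prop :=
  ∀ A : Set Ω, MeasurableSet A → 0 < P A →
    ∃ B ⊆ A, MeasurableSet B ∧ 0 < P B ∧ P B < P A

/-- A finitely supported measure: a finite convex combination of Dirac measures. -/
def FinitelySupported {S : Type*} [MeasurableSpace S] (μ : Measure S) : Prop :=
  ∃ (n : ℕ) (c : Fin n → ℝ≥0∞) (a : Fin n → S),
    (∑ i, c i) = 1 ∧ μ = ∑ i, c i • Measure.dirac (a i)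

/-- Continuity of a path of random variables with respect to the Ky Fan metric
(equivalently, the topology of convergence in probability). -/
def KyFanContinuousOn {Ω S : Type*} [MeasurableSpace Ω] [PseudoMetricSpace S]
    (P : Measure Ω) (γ : ℝ → Ω → S) (A : Set ℝ) : Prop :=
  ∀ t ∈ A, ∀ ε > 0, ∃ δ > 0, ∀ s ∈ A, |s - t| < δ → kyFanDist P (γ s) (γ t) < ε

/-- Continuity of a path of measures with respect to the Lévy–Prokhorov metric. -/
def LPContinuousOn {S : Type*} [MeasurableSpace S] [PseudoMetricSpace S]
    (α : ℝ → Measure S) (A : Set ℝ) : Prop :=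
  ∀ t ∈ A, ∀ ε > 0, ∃ δ > 0, ∀ s ∈ A, |s - t| < δ → levyProkhorovDist (α s) (α t) < ε

/-- A polygonal path in the space of measures with vertices in `V`: there is a partition
`0 = t₀ < t₁ < ⋯ < t_{n+1} = 1` and vertices `μᵢ ∈ V` such that on `[tᵢ, tᵢ₊₁]` the path
is the affine interpolation of `μᵢ` and `μᵢ₊₁`. -/
def IsPolygonalWithVertices {S : Type*} [MeasurableSpace S] (β : ℝ → Measure S)
    (V : Set (Measure S)) : Prop :=
  ∃ (n : ℕ) (t : Fin (n + 2) → ℝ) (μ : Fin (n + 2) → Measure S),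
    StrictMono t ∧ t 0 = 0 ∧ t (Fin.last (n + 1)) = 1 ∧ (∀ i, μ i ∈ V) ∧
    ∀ (i : Fin (n + 1)), ∀ s ∈ Set.Icc (t i.castSucc) (t i.succ),
      β s = ENNReal.ofReal ((t i.succ - s) / (t i.succ - t i.castSucc)) • μ i.castSucc
        + ENNReal.ofReal ((s - t i.castSucc) / (t i.succ - t i.castSucc)) • μ i.succ

section StrassenAux
open Metric Finset

lemma approx_flow {V : Type*} [Fintype V] [DecidableEq V]
    (p q : V → ℝ) (R : V → V → Prop) [DecidableRel R]
    (hp : ∀ i, 0 ≤ p i) (hq : ∀ j, 0 ≤ q j)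
    (hall : ∀ K : Finset V, ∑ i ∈ K, p i ≤ ∑ j ∈ Finset.univ.filter (fun j => ∃ i ∈ K, R i j), q j)
    {θ : ℝ} (hθ : 0 < θ) :
    ∃ m : V → V → ℝ, (∀ i j, 0 ≤ m i j) ∧ (∀ i j, ¬ R i j → m i j = 0) ∧
      (∀ i, ∑ j, m i j ≤ p i) ∧ (∀ j, ∑ i, m i j ≤ q j) ∧
      (∑ i, p i) - θ ≤ ∑ i, ∑ j, m i j := by
  classical
  -- choose a large denominator n
  obtain ⟨n, hn⟩ := exists_nat_gt ((2 * Fintype.card V) / θ)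
  have hcard0 : (0:ℝ) ≤ (2 * Fintype.card V) / θ := by positivity
  have hn0 : (0:ℝ) < n := lt_of_le_of_lt hcard0 hn
  have hnθ : (2 * Fintype.card V : ℝ) / n ≤ θ := by
    rw [div_le_iff₀ hn0]
    have := (div_lt_iff₀ hθ).mp hn
    linarith
  set a : V → ℕ := fun i => ⌊(n:ℝ) * p i⌋₊ with ha
  set b : V → ℕ := fun j => ⌈(n:ℝ) * q j⌉₊ with hb
  set L := Σ i : V, Fin (a i)
  set B := Σ j : V, Fin (b j)
  set t : L → Finset B := fun x => Finset.univ.filter (fun y => R x.1 y.1) with ht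
  -- cardinality of "all copies of cells in K"
  have card_fiber : ∀ (K : Finset V) (c : V → ℕ),
      (Finset.univ.filter (fun y : Σ j : V, Fin (c j) => y.1 ∈ K)).card = ∑ j ∈ K, c j := by
    intro K c
    have : (Finset.univ.filter (fun y : Σ j : V, Fin (c j) => y.1 ∈ K))
        = K.sigma (fun j => (Finset.univ : Finset (Fin (c j)))) := by
      ext y; simp [Finset.mem_sigma]
    rw [this, Finset.card_sigma]
    simp
  -- Hall's condition
  have hHall : ∀ s : Finset L, s.card ≤ (s.biUnion t).card := by
    intro s
    set K := s.image Sigma.fst with hK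
    have h1 : s ⊆ Finset.univ.filter (fun x : L => x.1 ∈ K) := by
      intro x hx
      simp only [Finset.mem_filter, Finset.mem_univ, true_and, hK]
      exact Finset.mem_image_of_mem _ hx
    have hcard1 : s.card ≤ ∑ i ∈ K, a i := by
      rw [← card_fiber K a]; exact card_le_card h1
    have h2 : s.biUnion t = Finset.univ.filter (fun y : B => y.1 ∈ Finset.univ.filter (fun j => ∃ i ∈ K, R i j)) := by
      ext y
      simp only [Finset.mem_biUnion, ht, Finset.mem_filter, Finset.mem_univ, true_and, hK, Finset.mem_image]
      constructor
      · rintro ⟨x, hx, hR⟩; exact ⟨x.1, ⟨x, hx, rfl⟩, hR⟩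
      · rintro ⟨i, ⟨x, hx, rfl⟩, hR⟩; exact ⟨x, hx, hR⟩
    have hcard2 : (s.biUnion t).card = ∑ j ∈ Finset.univ.filter (fun j => ∃ i ∈ K, R i j), b j := by
      rw [h2, card_fiber]
    rw [hcard2]
    refine hcard1.trans ?_
    have key : (∑ i ∈ K, (a i : ℝ)) ≤ ∑ j ∈ Finset.univ.filter (fun j => ∃ i ∈ K, R i j), (b j : ℝ) := by
      calc ∑ i ∈ K, (a i : ℝ) ≤ ∑ i ∈ K, (n:ℝ) * p i := by
            refine Finset.sum_le_sum fun i _ => ?_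
            exact Nat.floor_le (mul_nonneg hn0.le (hp i))
        _ = (n:ℝ) * ∑ i ∈ K, p i := by rw [Finset.mul_sum]
        _ ≤ (n:ℝ) * ∑ j ∈ Finset.univ.filter (fun j => ∃ i ∈ K, R i j), q j :=
            mul_le_mul_of_nonneg_left (hall K) hn0.le
        _ = ∑ j ∈ Finset.univ.filter (fun j => ∃ i ∈ K, R i j), (n:ℝ) * q j := by rw [Finset.mul_sum]
        _ ≤ ∑ j ∈ Finset.univ.filter (fun j => ∃ i ∈ K, R i j), (b j : ℝ) := by
            refine Finset.sum_le_sum fun j _ => Nat.le_ceil _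
    exact_mod_cast key
  obtain ⟨f, hf_inj, hf_mem⟩ := (Finset.all_card_le_biUnion_card_iff_exists_injective t).mp hHall
  set cnt : V → V → ℕ := fun i j => (Finset.univ.filter (fun x : L => x.1 = i ∧ (f x).1 = j)).card with hcnt
  set m₀ : V → V → ℝ := fun i j => (cnt i j : ℝ) / n with hm₀
  have hm₀_nonneg : ∀ i j, 0 ≤ m₀ i j := fun i j => by positivity
  have hsupp₀ : ∀ i j, ¬ R i j → m₀ i j = 0 := by
    intro i j hR
    have : (Finset.univ.filter (fun x : L => x.1 = i ∧ (f x).1 = j)) = ∅ := by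
      rw [Finset.filter_eq_empty_iff]
      rintro x - ⟨h1, h2⟩
      have := hf_mem x
      rw [ht, Finset.mem_filter] at this
      exact hR (h1 ▸ h2 ▸ this.2)
    simp [hm₀, hcnt, this]
  -- row sums of counts
  have row_cnt : ∀ i, ∑ j, (cnt i j : ℝ) = (a i : ℝ) := by
    intro i
    have h0 : (Finset.univ.filter (fun x : L => x.1 = i)).card = ∑ j ∈ Finset.univ, ((Finset.univ.filter (fun x : L => x.1 = i)).filter (fun x => (f x).1 = j)).card :=
      Finset.card_eq_sum_card_fiberwise (fun x _ => Finset.mem_univ _)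
    have h1 : (Finset.univ.filter (fun x : L => x.1 = i)).card = a i := by
      have := card_fiber {i} a
      simpa using this
    have h2 : ∀ j, ((Finset.univ.filter (fun x : L => x.1 = i)).filter (fun x => (f x).1 = j)) = (Finset.univ.filter (fun x : L => x.1 = i ∧ (f x).1 = j)) := by
      intro j; rw [Finset.filter_filter]
    rw [h1] at h0
    push_cast
    rw [← Nat.cast_sum]
    congr 1
    rw [h0]
    exact Finset.sum_congr rfl (fun j _ => by rw [h2 j])
  -- column sums of counts
  have col_cnt : ∀ j, ∑ i, (cnt i j : ℝ) ≤ (b j : ℝ) := by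
    intro j
    have h0 : (Finset.univ.filter (fun x : L => (f x).1 = j)).card = ∑ i ∈ Finset.univ, ((Finset.univ.filter (fun x : L => (f x).1 = j)).filter (fun x => x.1 = i)).card :=
      Finset.card_eq_sum_card_fiberwise (fun x _ => Finset.mem_univ _)
    have h2 : ∀ i, ((Finset.univ.filter (fun x : L => (f x).1 = j)).filter (fun x => x.1 = i)) = (Finset.univ.filter (fun x : L => x.1 = i ∧ (f x).1 = j)) := by
      intro i; rw [Finset.filter_filter]; congr 1; ext x; tauto
    have h1 : (Finset.univ.filter (fun x : L => (f x).1 = j)).card ≤ b j := by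
      have hmaps : ∀ x ∈ Finset.univ.filter (fun x : L => (f x).1 = j), f x ∈ Finset.univ.filter (fun y : B => y.1 = j) := by
        intro x hx
        simp only [Finset.mem_filter, Finset.mem_univ, true_and] at hx ⊢
        exact hx
      have := Finset.card_le_card_of_injOn f hmaps (Set.injOn_of_injective hf_inj)
      refine this.trans ?_
      have := card_fiber {j} b
      simp only [Finset.sum_singleton] at this
      rw [← this]
      apply le_of_eq
      congr 1
      ext y; simp
    have hsum : (Finset.univ.filter (fun x : L => (f x).1 = j)).card = ∑ i, cnt i j := by
      rw [h0]
      exact Finset.sum_congr rfl fun i _ => by rw [h2 i]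
    have : ∑ i, cnt i j ≤ b j := hsum ▸ h1
    exact_mod_cast this
  -- row sums of m₀
  have row₀ : ∀ i, ∑ j, m₀ i j = (a i : ℝ) / n := by
    intro i
    rw [hm₀]
    simp only
    rw [← Finset.sum_div, row_cnt i]
  have col₀_le : ∀ j, ∑ i, m₀ i j ≤ (b j : ℝ) / n := by
    intro j
    rw [hm₀]
    simp only
    rw [← Finset.sum_div]
    gcongr
    exact col_cnt j
  -- the scaling factors
  set sc : V → ℝ := fun j => if (∑ i, m₀ i j) ≤ q j then (1:ℝ) else q j / (∑ i, m₀ i j) with hsc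
  have hsc_nonneg : ∀ j, 0 ≤ sc j := by
    intro j; rw [hsc]; dsimp only
    split_ifs with h
    · norm_num
    · push_neg at h
      exact div_nonneg (hq j) (le_of_lt ((hq j).trans_lt h))
  have hsc_le_one : ∀ j, sc j ≤ 1 := by
    intro j; rw [hsc]; dsimp only
    split_ifs with h
    · exact le_refl 1
    · push_neg at h
      exact div_le_one_of_le₀ h.le (le_of_lt ((hq j).trans_lt h))
  set m : V → V → ℝ := fun i j => m₀ i j * sc j with hm
  have hm_nonneg : ∀ i j, 0 ≤ m i j := fun i j => mul_nonneg (hm₀_nonneg i j) (hsc_nonneg j)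
  have hm_le : ∀ i j, m i j ≤ m₀ i j := fun i j =>
    mul_le_of_le_one_right (hm₀_nonneg i j) (hsc_le_one j)
  refine ⟨m, hm_nonneg, ?_, ?_, ?_, ?_⟩
  · intro i j hR
    rw [hm]; dsimp only
    rw [hsupp₀ i j hR, zero_mul]
  · intro i
    calc ∑ j, m i j ≤ ∑ j, m₀ i j := Finset.sum_le_sum fun j _ => hm_le i j
      _ = (a i : ℝ) / n := row₀ i
      _ ≤ ((n:ℝ) * p i) / n := by gcongr; exact Nat.floor_le (mul_nonneg hn0.le (hp i))
      _ = p i := by field_simp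
  · intro j
    have hfac : ∑ i, m i j = (∑ i, m₀ i j) * sc j := by
      rw [hm]; dsimp only; rw [← Finset.sum_mul]
    rw [hfac, hsc]; dsimp only
    split_ifs with h
    · simpa using h
    · push_neg at h
      have hcol_pos : 0 < ∑ i, m₀ i j := (hq j).trans_lt h
      rw [mul_div_cancel₀ _ hcol_pos.ne']
  · -- total mass
    have key : ∀ j, (∑ i, m₀ i j) - 1/n ≤ ∑ i, m i j := by
      intro j
      have hfac : ∑ i, m i j = (∑ i, m₀ i j) * sc j := by
        rw [hm]; dsimp only; rw [← Finset.sum_mul]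
      rw [hfac, hsc]; dsimp only
      split_ifs with h
      · rw [mul_one]
        have : (0:ℝ) < 1/n := by positivity
        linarith
      · push_neg at h
        have hcol_pos : 0 < ∑ i, m₀ i j := (hq j).trans_lt h
        rw [mul_div_cancel₀ _ hcol_pos.ne']
        have hb1 : (b j : ℝ) ≤ (n:ℝ) * q j + 1 := by
          have := Nat.ceil_lt_add_one (mul_nonneg hn0.le (hq j))
          exact this.le
        have := col₀_le j
        have h2 : ∑ i, m₀ i j ≤ q j + 1/n := by
          refine this.trans ?_
          rw [div_le_iff₀ hn0]
          field_simp at hb1 ⊢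
          linarith
        linarith
    have hrowsum : ∀ i, (p i) - 1/n ≤ ∑ j, m₀ i j := by
      intro i
      rw [row₀ i]
      have hfl : (n:ℝ) * p i - 1 < (a i : ℝ) := Nat.sub_one_lt_floor _
      have h1 : p i - 1/n ≤ ((n:ℝ) * p i - 1)/n := by
        rw [sub_div]
        have hpp : (n:ℝ) * p i / n = p i := by field_simp
        rw [hpp]
      refine h1.trans ?_
      gcongr
    have h1 : ∑ i, p i - (Fintype.card V : ℝ)/n ≤ ∑ i, ∑ j, m₀ i j := by
      have := Finset.sum_le_sum (fun i (_ : i ∈ Finset.univ) => hrowsum i)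
      rw [Finset.sum_sub_distrib] at this
      simpa [Finset.card_univ, div_eq_mul_inv, Finset.sum_const, nsmul_eq_mul] using this
    have h2 : ∑ j, ∑ i, m₀ i j - (Fintype.card V : ℝ)/n ≤ ∑ j, ∑ i, m i j := by
      have := Finset.sum_le_sum (fun j (_ : j ∈ Finset.univ) => key j)
      rw [Finset.sum_sub_distrib] at this
      simpa [Finset.card_univ, div_eq_mul_inv, Finset.sum_const, nsmul_eq_mul] using this
    have hswap : ∑ i, ∑ j, m₀ i j = ∑ j, ∑ i, m₀ i j := Finset.sum_comm
    have hswap2 : (∑ i, ∑ j, m i j) = ∑ j, ∑ i, m i j := Finset.sum_comm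
    have hsplit : (2 * Fintype.card V : ℝ)/n = (Fintype.card V : ℝ)/n + (Fintype.card V : ℝ)/n := by ring
    linarith [hnθ]

lemma exact_flow {V : Type*} [Fintype V]
    (p q : V → ℝ) (R : V → V → Prop) [DecidableRel R]
    (hp : ∀ i, 0 ≤ p i) (hq : ∀ j, 0 ≤ q j)
    (hpq : ∑ i, p i = ∑ j, q j)
    {θ : ℝ} (m : V → V → ℝ) (hm0 : ∀ i j, 0 ≤ m i j)
    (hsupp : ∀ i j, ¬ R i j → m i j = 0)
    (hrow : ∀ i, ∑ j, m i j ≤ p i) (hcol : ∀ j, ∑ i, m i j ≤ q j)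
    (htot : (∑ i, p i) - θ ≤ ∑ i, ∑ j, m i j) :
    ∃ M : V → V → ℝ, (∀ i j, 0 ≤ M i j) ∧
      (∀ i, ∑ j, M i j = p i) ∧ (∀ j, ∑ i, M i j = q j) ∧
      (∑ i, ∑ j, (if R i j then 0 else M i j)) ≤ θ := by
  classical
  set r : V → ℝ := fun i => p i - ∑ j, m i j with hr
  set c : V → ℝ := fun j => q j - ∑ i, m i j with hc
  have hr0 : ∀ i, 0 ≤ r i := fun i => sub_nonneg.mpr (hrow i)
  have hc0 : ∀ j, 0 ≤ c j := fun j => sub_nonneg.mpr (hcol j)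
  set T : ℝ := ∑ i, r i with hT
  have hT0 : 0 ≤ T := Finset.sum_nonneg fun i _ => hr0 i
  have hTr : T = (∑ i, p i) - ∑ i, ∑ j, m i j := by
    rw [hT, hr]; rw [Finset.sum_sub_distrib]
  have hTc : T = ∑ j, c j := by
    rw [hTr, hc, Finset.sum_sub_distrib, hpq, Finset.sum_comm]
  have hTθ : T ≤ θ := by rw [hTr]; linarith
  set M : V → V → ℝ := fun i j => m i j + r i * c j / T with hM
  have hM0 : ∀ i j, 0 ≤ M i j := fun i j =>
    add_nonneg (hm0 i j) (div_nonneg (mul_nonneg (hr0 i) (hc0 j)) hT0)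
  have hcancel_r : ∀ i, r i * T / T = r i := by
    intro i
    rcases eq_or_ne T 0 with h | h
    · have : r i = 0 := by
        have := Finset.sum_eq_zero_iff_of_nonneg (fun i (_ : i ∈ Finset.univ) => hr0 i) |>.mp (hT ▸ h)
        exact this i (Finset.mem_univ i)
      simp [this]
    · rw [mul_div_assoc, div_self h, mul_one]
  have hcancel_c : ∀ j, c j * T / T = c j := by
    intro j
    rcases eq_or_ne T 0 with h | h
    · have : c j = 0 := by
        have h' : ∑ j, c j = 0 := by rw [← hTc]; exact h
        have := Finset.sum_eq_zero_iff_of_nonneg (fun j (_ : j ∈ Finset.univ) => hc0 j) |>.mp h'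
        exact this j (Finset.mem_univ j)
      simp [this]
    · rw [mul_div_assoc, div_self h, mul_one]
  refine ⟨M, hM0, ?_, ?_, ?_⟩
  · intro i
    rw [hM]
    simp only
    rw [Finset.sum_add_distrib]
    have : ∑ j, r i * c j / T = r i := by
      rw [← Finset.sum_div, ← Finset.mul_sum, ← hTc]
      exact hcancel_r i
    rw [this, hr]; ring
  · intro j
    rw [hM]
    simp only
    rw [Finset.sum_add_distrib]
    have : ∑ i, r i * c j / T = c j := by
      rw [← Finset.sum_div, ← Finset.sum_mul]
      rw [← hT]
      rw [mul_comm]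
      exact hcancel_c j
    rw [this, hc]; ring
  · have hle : ∀ i j, (if R i j then 0 else M i j) ≤ r i * c j / T := by
      intro i j
      split_ifs with h
      · exact div_nonneg (mul_nonneg (hr0 i) (hc0 j)) hT0
      · rw [hM]; simp only
        rw [hsupp i j h, zero_add]
    calc ∑ i, ∑ j, (if R i j then 0 else M i j) ≤ ∑ i, ∑ j, r i * c j / T :=
          Finset.sum_le_sum fun i _ => Finset.sum_le_sum fun j _ => hle i j
      _ = ∑ i, r i * T / T := by
          refine Finset.sum_congr rfl fun i _ => ?_
          rw [← Finset.sum_div, ← Finset.mul_sum, ← hTc]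
      _ = T := by
          rw [← Finset.sum_div, ← Finset.sum_mul, ← hT, mul_div_assoc]
          rcases eq_or_ne T 0 with h | h
          · simp [h]
          · rw [div_self h, mul_one]
      _ ≤ θ := hTθ

variable {S : Type*} [MeasurableSpace S] [MetricSpace S] [BorelSpace S]
    [TopologicalSpace.SeparableSpace S]

lemma lp_le_kyfan (P Q : Measure S) [IsProbabilityMeasure P] [IsProbabilityMeasure Q]
    (μ : Measure (S × S)) (hμ : IsProbabilityMeasure μ)
    (h1 : μ.map Prod.fst = P) (h2 : μ.map Prod.snd = Q) :
    levyProkhorovDist P Q ≤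
      sInf {ε : ℝ | 0 < ε ∧ (μ {p : S × S | ε ≤ dist p.1 p.2}).toReal ≤ ε} := by
  haveI : SecondCountableTopology S := UniformSpace.secondCountable_of_separable S
  set k := sInf {ε : ℝ | 0 < ε ∧ (μ {p : S × S | ε ≤ dist p.1 p.2}).toReal ≤ ε} with hk
  have hmem1 : (1:ℝ) ∈ {ε : ℝ | 0 < ε ∧ (μ {p : S × S | ε ≤ dist p.1 p.2}).toReal ≤ ε} := by
    refine ⟨one_pos, ?_⟩
    have : μ {p : S × S | 1 ≤ dist p.1 p.2} ≤ 1 := (measure_mono (subset_univ _)).trans (by simp)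
    calc (μ {p : S × S | 1 ≤ dist p.1 p.2}).toReal ≤ (1 : ℝ≥0∞).toReal :=
        ENNReal.toReal_mono (by simp) this
      _ = 1 := by simp
  have hne : {ε : ℝ | 0 < ε ∧ (μ {p : S × S | ε ≤ dist p.1 p.2}).toReal ≤ ε}.Nonempty := ⟨1, hmem1⟩
  have hbdd : BddBelow {ε : ℝ | 0 < ε ∧ (μ {p : S × S | ε ≤ dist p.1 p.2}).toReal ≤ ε} :=
    ⟨0, fun x hx => hx.1.le⟩
  have hk0 : 0 ≤ k := le_csInf hne fun x hx => hx.1.le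
  rw [levyProkhorovDist]
  have hedist : levyProkhorovEDist P Q ≤ ENNReal.ofReal k := by
    apply levyProkhorovEDist_le_of_forall
    intro ε B hε hεtop hB
    have hkε : k < ε.toReal := by
      have h1' : (ENNReal.ofReal k).toReal < ε.toReal :=
        ENNReal.toReal_strict_mono hεtop.ne hε
      rwa [ENNReal.toReal_ofReal hk0] at h1'
    obtain ⟨ε₀, hε₀mem, hε₀lt⟩ := (csInf_lt_iff hbdd hne).mp hkε
    obtain ⟨hε₀pos, hε₀bound⟩ := hε₀mem
    set bad := {p : S × S | ε₀ ≤ dist p.1 p.2} with hbad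
    have hbad_closed : IsClosed bad := isClosed_le continuous_const (continuous_fst.dist continuous_snd)
    have hbad_meas : MeasurableSet bad := hbad_closed.measurableSet
    have hμbad : μ bad ≤ ε := by
      have h0 : μ bad ≠ ∞ := measure_ne_top μ _
      have : μ bad ≤ ENNReal.ofReal ε₀ := by
        rw [← ENNReal.ofReal_toReal h0]
        exact ENNReal.ofReal_le_ofReal hε₀bound
      refine this.trans ?_
      calc ENNReal.ofReal ε₀ ≤ ENNReal.ofReal ε.toReal := ENNReal.ofReal_le_ofReal hε₀lt.le
        _ = ε := ENNReal.ofReal_toReal hεtop.ne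
    have key : ∀ (X Y : S × S → S), (∀ p : S × S, dist (X p) (Y p) = dist p.1 p.2) →
        Measurable X → Measurable Y → ∀ (ν ρ : Measure S), μ.map X = ν → μ.map Y = ρ →
        ν B ≤ ρ (thickening ε.toReal B) + ε := by
      intro X Y hXY hmX hmY ν ρ hν hρ
      have hthick_open : IsOpen (thickening ε.toReal B) := isOpen_thickening
      have hνB : ν B = μ (X ⁻¹' B) := by rw [← hν, Measure.map_apply hmX hB]
      have hρT : ρ (thickening ε.toReal B) = μ (Y ⁻¹' (thickening ε.toReal B)) := by
        rw [← hρ, Measure.map_apply hmY hthick_open.measurableSet]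
      rw [hνB, hρT]
      have hsplit : μ (X ⁻¹' B) ≤ μ (X ⁻¹' B \ bad) + μ bad := by
        calc μ (X ⁻¹' B) ≤ μ ((X ⁻¹' B \ bad) ∪ bad) := measure_mono (by
              intro p hp
              by_cases h : p ∈ bad
              · exact Or.inr h
              · exact Or.inl ⟨hp, h⟩)
          _ ≤ μ (X ⁻¹' B \ bad) + μ bad := measure_union_le _ _
      have hsub : X ⁻¹' B \ bad ⊆ Y ⁻¹' (thickening ε.toReal B) := by
        intro p hp
        obtain ⟨hpB, hpbad⟩ := hp
        simp only [hbad, mem_setOf_eq, not_le] at hpbad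
        rw [Set.mem_preimage, mem_thickening_iff]
        refine ⟨X p, hpB, ?_⟩
        rw [dist_comm, hXY]
        calc dist p.1 p.2 < ε₀ := hpbad
          _ < ε.toReal := hε₀lt
      calc μ (X ⁻¹' B) ≤ μ (X ⁻¹' B \ bad) + μ bad := hsplit
        _ ≤ μ (Y ⁻¹' (thickening ε.toReal B)) + ε := add_le_add (measure_mono hsub) hμbad
    constructor
    · exact key Prod.fst Prod.snd (fun p => rfl) measurable_fst measurable_snd P Q h1 h2
    · exact key Prod.snd Prod.fst (fun p => dist_comm p.2 p.1) measurable_snd measurable_fst Q P h2 h1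
  calc (levyProkhorovEDist P Q).toReal ≤ (ENNReal.ofReal k).toReal :=
      ENNReal.toReal_mono ENNReal.ofReal_ne_top hedist
    _ = k := ENNReal.toReal_ofReal hk0

lemma exists_good_coupling (P Q : Measure S) [IsProbabilityMeasure P] [IsProbabilityMeasure Q]
    {δ : ℝ} (hδ : 0 < δ) :
    ∃ μ : Measure (S × S), IsProbabilityMeasure μ ∧ μ.map Prod.fst = P ∧ μ.map Prod.snd = Q ∧
      μ {p : S × S | levyProkhorovDist P Q + δ ≤ dist p.1 p.2}
        ≤ ENNReal.ofReal (levyProkhorovDist P Q + δ) := by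
  classical
  haveI : SecondCountableTopology S := UniformSpace.secondCountable_of_separable S
  haveI : Nonempty S := by
    rcases isEmpty_or_nonempty S with h | h
    · exfalso
      have h1 : P univ = 1 := measure_univ
      have h2 : (univ : Set S) = ∅ := univ_eq_empty_iff.mpr h
      rw [h2, measure_empty] at h1
      exact zero_ne_one h1
    · exact h
  set α := levyProkhorovDist P Q with hα
  have hα0 : 0 ≤ α := ENNReal.toReal_nonneg
  set t : ℝ := α + δ/4 with htdef
  have ht0 : 0 < t := by positivity
  set ρ : ℝ := δ/16 with hρdef
  have hρ0 : 0 < ρ := by positivity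
  set η : ℝ := δ/8 with hηdef
  have hη0 : 0 < η := by positivity
  -- the dense sequence and the partition into small cells
  set z : ℕ → S := TopologicalSpace.denseSeq S with hz
  have hzd : DenseRange z := TopologicalSpace.denseRange_denseSeq S
  set D : ℕ → Set S := disjointed (fun k => closedBall (z k) ρ) with hD
  have hDsub : ∀ k, D k ⊆ closedBall (z k) ρ := fun k => disjointed_subset _ k
  have hDmeas : ∀ k, MeasurableSet (D k) :=
    MeasurableSet.disjointed (fun k => measurableSet_closedBall)
  have hDdisj : Pairwise (Function.onFun Disjoint D) := disjoint_disjointed _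
  have hDcover : (⋃ k, D k) = Set.univ := by
    rw [hD, iUnion_disjointed]
    apply Set.eq_univ_of_forall
    intro x
    obtain ⟨k, hk⟩ := hzd.exists_dist_lt x hρ0
    exact Set.mem_iUnion.mpr ⟨k, by rw [mem_closedBall]; exact hk.le⟩
  -- choose N capturing most of the mass
  set A : ℕ → Set S := fun n => ⋃ k ∈ Finset.range n, D k with hA
  have hAmeas : ∀ n, MeasurableSet (A n) := fun n => (Finset.range n).measurableSet_biUnion (fun k _ => hDmeas k)
  have hAmono : Monotone A := by
    intro a b hab
    refine Set.iUnion₂_subset fun k hk => ?_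
    exact Set.subset_iUnion₂ (s := fun k (_ : k ∈ Finset.range b) => D k) k
      (Finset.mem_range.mpr (lt_of_lt_of_le (Finset.mem_range.mp hk) hab))
  have hAUnion : (⋃ n, A n) = Set.univ := by
    rw [← hDcover]
    apply Set.Subset.antisymm
    · exact Set.iUnion_subset fun n => Set.iUnion₂_subset fun k _ => Set.subset_iUnion D k
    · refine Set.iUnion_subset fun k => ?_
      refine Set.Subset.trans ?_ (Set.subset_iUnion A (k+1))
      exact Set.subset_iUnion₂ (s := fun n (_ : n ∈ Finset.range (k+1)) => D n) k (by simp)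
  have hconv : ∃ N : ℕ, 1 - ENNReal.ofReal η ≤ P (A N) ∧ 1 - ENNReal.ofReal η ≤ Q (A N) := by
    have hP := tendsto_measure_iUnion_atTop (μ := P) hAmono
    have hQ := tendsto_measure_iUnion_atTop (μ := Q) hAmono
    rw [hAUnion] at hP hQ
    have h1 : (1 : ℝ≥0∞) - ENNReal.ofReal η < 1 := by
      apply ENNReal.sub_lt_self
      · exact ENNReal.one_ne_top
      · exact one_ne_zero
      · simpa using hη0
    rw [measure_univ] at hP
    rw [measure_univ] at hQ
    have e1 := hP.eventually_const_lt h1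
    have e2 := hQ.eventually_const_lt h1
    obtain ⟨N, hN1, hN2⟩ := (e1.and e2).exists
    exact ⟨N, hN1.le, hN2.le⟩
  obtain ⟨N, hPN, hQN⟩ := hconv
  -- the cells
  set C : Fin (N+1) → Set S := fun i => if i = Fin.last N then (A N)ᶜ else D i with hC
  have hClast : C (Fin.last N) = (A N)ᶜ := by simp only [hC]; simp
  have hCD : ∀ i : Fin (N+1), i ≠ Fin.last N → C i = D i := by
    intro i hi; simp only [hC, if_neg hi]
  have hCmeas : ∀ i, MeasurableSet (C i) := by
    intro i
    rcases eq_or_ne i (Fin.last N) with hi | hi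
    · rw [hi, hClast]; exact (hAmeas N).compl
    · rw [hCD i hi]; exact hDmeas _
  have hDA : ∀ i : Fin (N+1), i ≠ Fin.last N → D (i:ℕ) ⊆ A N := by
    intro i hi
    have h2 : (i:ℕ) < N := Fin.val_lt_last hi
    exact Set.subset_iUnion₂ (s := fun k (_ : k ∈ Finset.range N) => D k) (i:ℕ)
      (Finset.mem_range.mpr h2)
  have hCdisj : Pairwise (Function.onFun Disjoint C) := by
    have key : ∀ a b : Fin (N+1), a ≠ b → a = Fin.last N → Disjoint (C a) (C b) := by
      intro a b hab ha
      have hb : b ≠ Fin.last N := fun h => hab (ha.trans h.symm)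
      rw [ha, hClast, hCD b hb]
      exact disjoint_compl_left.mono_right (hDA b hb)
    intro i j hij
    show Disjoint (C i) (C j)
    rcases eq_or_ne i (Fin.last N) with hi | hi
    · exact key i j hij hi
    · rcases eq_or_ne j (Fin.last N) with hj | hj
      · exact (key j i (Ne.symm hij) hj).symm
      · rw [hCD i hi, hCD j hj]
        exact hDdisj (show (i:ℕ) ≠ (j:ℕ) from fun h => hij (Fin.val_injective h))
  have hCcover : (⋃ i, C i) = Set.univ := by
    apply Set.eq_univ_of_forall
    intro x
    by_cases hx : x ∈ A N
    · rw [hA] at hx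
      simp only [Finset.mem_range, Set.mem_iUnion] at hx
      obtain ⟨k, hk, hxk⟩ := hx
      refine Set.mem_iUnion.mpr ⟨⟨k, by omega⟩, ?_⟩
      rw [hCD ⟨k, by omega⟩ (Fin.ne_of_val_ne (by simp [Fin.val_last]; omega))]
      exact hxk
    · exact Set.mem_iUnion.mpr ⟨Fin.last N, by rw [hClast]; exact hx⟩
  -- real cell masses
  set pr : Fin (N+1) → ℝ := fun i => (P (C i)).toReal with hpr
  set qr : Fin (N+1) → ℝ := fun j => (Q (C j)).toReal with hqr
  have hpr0 : ∀ i, 0 ≤ pr i := fun i => ENNReal.toReal_nonneg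
  have hqr0 : ∀ j, 0 ≤ qr j := fun j => ENNReal.toReal_nonneg
  have hsum_meas : ∀ (μ' : Measure S) (K : Finset (Fin (N+1))),
      μ' (⋃ i ∈ K, C i) = ∑ i ∈ K, μ' (C i) := by
    intro μ' K
    refine measure_biUnion_finset ?_ (fun i _ => hCmeas i)
    exact fun i _ j _ hij => hCdisj hij
  have hcover_univ : (⋃ i ∈ (Finset.univ : Finset (Fin (N+1))), C i) = Set.univ := by
    rw [← hCcover]; simp
  have hprsum : ∑ i, pr i = 1 := by
    have h1 := hsum_meas P Finset.univ
    rw [hcover_univ, measure_univ] at h1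
    rw [hpr, ← ENNReal.toReal_sum (fun i _ => measure_ne_top P _), ← h1]
    simp
  have hqrsum : ∑ j, qr j = 1 := by
    have h1 := hsum_meas Q Finset.univ
    rw [hcover_univ, measure_univ] at h1
    rw [hqr, ← ENNReal.toReal_sum (fun j _ => measure_ne_top Q _), ← h1]
    simp
  -- the LP inequality
  have hedist : levyProkhorovEDist P Q < ENNReal.ofReal t := by
    have h1 : levyProkhorovEDist P Q ≠ ∞ := levyProkhorovEDist_ne_top P Q
    rw [ENNReal.lt_ofReal_iff_toReal_lt h1]
    have h2 : (levyProkhorovEDist P Q).toReal = α := by rw [hα]; rfl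
    rw [h2, htdef]
    linarith
  have hPle : ∀ B : Set S, MeasurableSet B → P B ≤ Q (thickening t B) + ENNReal.ofReal t := by
    intro B hB
    have h := left_measure_le_of_levyProkhorovEDist_lt hedist hB
    rwa [ENNReal.toReal_ofReal ht0.le] at h
  -- vertex-level data
  set Rc : Fin (N+1) → Fin (N+1) → Prop :=
    fun i j => i = Fin.last N ∨ j = Fin.last N ∨ dist (z i) (z j) ≤ t + 2*ρ with hRc
  set Rh : Fin (N+1) ⊕ Unit → Fin (N+1) ⊕ Unit → Prop := fun x y =>
    Sum.elim (fun i => Sum.elim (fun j => Rc i j) (fun _ => True) y) (fun _ => True) x with hRh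
  set ph : Fin (N+1) ⊕ Unit → ℝ := Sum.elim pr (fun _ => t) with hph
  set qh : Fin (N+1) ⊕ Unit → ℝ := Sum.elim qr (fun _ => t) with hqh
  have hph0 : ∀ x, 0 ≤ ph x := by rintro (i | u); exacts [hpr0 i, ht0.le]
  have hqh0 : ∀ y, 0 ≤ qh y := by rintro (j | u); exacts [hqr0 j, ht0.le]
  have hsumph : ∑ x, ph x = 1 + t := by
    rw [Fintype.sum_sum_type]
    simp only [hph, Sum.elim_inl, Sum.elim_inr]
    rw [hprsum]; simp
  have hsumqh : ∑ y, qh y = 1 + t := by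
    rw [Fintype.sum_sum_type]
    simp only [hqh, Sum.elim_inl, Sum.elim_inr]
    rw [hqrsum]; simp
  -- The Hall condition
  have hall : ∀ K : Finset (Fin (N+1) ⊕ Unit), ∑ x ∈ K, ph x ≤
      ∑ y ∈ Finset.univ.filter (fun y => ∃ x ∈ K, Rh x y), qh y := by
    intro K
    by_cases hK : ∃ x ∈ K, ∀ y, Rh x y
    · obtain ⟨x₀, hx₀K, hx₀⟩ := hK
      have hfil : Finset.univ.filter (fun y => ∃ x ∈ K, Rh x y) = Finset.univ :=
        Finset.filter_true_of_mem (fun y _ => ⟨x₀, hx₀K, hx₀ y⟩)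
      rw [hfil, hsumqh]
      have h1 : ∑ x ∈ K, ph x ≤ ∑ x, ph x := Finset.sum_le_univ_sum_of_nonneg hph0
      rw [hsumph] at h1
      exact h1
    · push_neg at hK
      have hmem : ∀ x ∈ K, ∃ i : Fin (N+1), x = Sum.inl i ∧ i ≠ Fin.last N := by
        rintro (i | u) hx
        · refine ⟨i, rfl, fun hi => ?_⟩
          obtain ⟨y, hy⟩ := hK (Sum.inl i) hx
          apply hy
          rcases y with j | u
          · exact Or.inl hi
          · trivial
        · obtain ⟨y, hy⟩ := hK (Sum.inr u) hx
          exact absurd trivial hy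
      set K' : Finset (Fin (N+1)) := Finset.univ.filter (fun i => Sum.inl i ∈ K) with hK'
      have hK'last : ∀ i ∈ K', i ≠ Fin.last N := by
        intro i hi
        rw [hK', Finset.mem_filter] at hi
        obtain ⟨j, hj, hjl⟩ := hmem _ hi.2
        rwa [← Sum.inl_injective hj] at hjl
      have hKeq : K = K'.image Sum.inl := by
        ext x
        simp only [Finset.mem_image, hK', Finset.mem_filter, Finset.mem_univ, true_and]
        constructor
        · intro hx
          obtain ⟨i, rfl, _⟩ := hmem x hx
          exact ⟨i, hx, rfl⟩
        · rintro ⟨i, hi, rfl⟩; exact hi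
      rcases Finset.eq_empty_or_nonempty K' with hKe | ⟨i₀, hi₀⟩
      · rw [hKeq, hKe]
        simpa using Finset.sum_nonneg (fun y _ => hqh0 y)
      · set U : Set S := ⋃ i ∈ K', C i with hU
        have hUmeas : MeasurableSet U := K'.measurableSet_biUnion fun i _ => hCmeas i
        have hLHS : ∑ x ∈ K, ph x = (P U).toReal := by
          rw [hKeq, Finset.sum_image (fun a _ b _ h => Sum.inl_injective h)]
          rw [hU, hsum_meas P K', ENNReal.toReal_sum (fun i _ => measure_ne_top P _)]
          exact Finset.sum_congr rfl fun i _ => by simp [hph, hpr]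
        set NK : Finset (Fin (N+1)) := Finset.univ.filter
          (fun j => j ≠ Fin.last N ∧ ∃ i ∈ K', dist (z i) (z j) ≤ t + 2*ρ) with hNK
        have hthick : thickening t U ⊆ (⋃ j ∈ NK, C j) ∪ C (Fin.last N) := by
          intro x hx
          have hxcell : x ∈ ⋃ i, C i := hCcover.symm ▸ Set.mem_univ x
          obtain ⟨j, hj⟩ := Set.mem_iUnion.mp hxcell
          rcases eq_or_ne j (Fin.last N) with hjl | hjl
          · right; rw [← hjl]; exact hj
          · left
            rw [mem_thickening_iff] at hx
            obtain ⟨u, huU, hdu⟩ := hx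
            rw [hU] at huU
            obtain ⟨i, hiK', hu⟩ := Set.mem_iUnion₂.mp huU
            have hu' : u ∈ closedBall (z i) ρ := hDsub i (by rwa [hCD i (hK'last i hiK')] at hu)
            have hx' : x ∈ closedBall (z j) ρ := hDsub j (by rwa [hCD j hjl] at hj)
            have hdist : dist (z i) (z j) ≤ t + 2*ρ := by
              have h1 : dist (z (i:ℕ)) u ≤ ρ := by rw [dist_comm]; exact mem_closedBall.mp hu'
              have h2 : dist x (z (j:ℕ)) ≤ ρ := mem_closedBall.mp hx'
              have h3 : dist u x < t := by rw [dist_comm]; exact hdu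
              calc dist (z (i:ℕ)) (z (j:ℕ)) ≤ dist (z (i:ℕ)) u + dist u x + dist x (z (j:ℕ)) :=
                    dist_triangle4 _ _ _ _
                _ ≤ t + 2*ρ := by linarith
            refine Set.mem_iUnion₂.mpr ⟨j, ?_, hj⟩
            rw [hNK, Finset.mem_filter]
            exact ⟨Finset.mem_univ j, hjl, i, hiK', hdist⟩
        have hQthick : (Q (thickening t U)).toReal ≤ ∑ j ∈ NK, qr j + qr (Fin.last N) := by
          have h1 : Q (thickening t U) ≤ ∑ j ∈ NK, Q (C j) + Q (C (Fin.last N)) := by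
            refine (measure_mono hthick).trans ?_
            refine (measure_union_le _ _).trans ?_
            rw [hsum_meas Q NK]
          have h2 : (∑ j ∈ NK, Q (C j) + Q (C (Fin.last N))) ≠ ∞ := by
            refine ENNReal.add_ne_top.mpr ⟨?_, measure_ne_top Q _⟩
            exact (ENNReal.sum_lt_top.mpr (fun j _ => measure_lt_top Q _)).ne
          refine (ENNReal.toReal_mono h2 h1).trans ?_
          rw [ENNReal.toReal_add (ENNReal.sum_lt_top.mpr (fun j _ => measure_lt_top Q _)).ne
            (measure_ne_top Q _), ENNReal.toReal_sum (fun j _ => measure_ne_top Q _)]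
        have hPU : (P U).toReal ≤ (Q (thickening t U)).toReal + t := by
          have h1 := hPle U hUmeas
          have h2 : (Q (thickening t U) + ENNReal.ofReal t) ≠ ∞ :=
            ENNReal.add_ne_top.mpr ⟨measure_ne_top Q _, ENNReal.ofReal_ne_top⟩
          refine (ENNReal.toReal_mono h2 h1).trans_eq ?_
          rw [ENNReal.toReal_add (measure_ne_top Q _) ENNReal.ofReal_ne_top,
            ENNReal.toReal_ofReal ht0.le]
        set Tgt : Finset (Fin (N+1) ⊕ Unit) :=
          ((NK ∪ {Fin.last N}).image Sum.inl) ∪ {Sum.inr ()} with hTgt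
        have hTgt_sub : Tgt ⊆ Finset.univ.filter (fun y => ∃ x ∈ K, Rh x y) := by
          intro y hy
          rw [Finset.mem_filter]
          refine ⟨Finset.mem_univ y, ?_⟩
          have hi₀K : Sum.inl i₀ ∈ K := by
            rw [hK', Finset.mem_filter] at hi₀; exact hi₀.2
          rw [hTgt, Finset.mem_union, Finset.mem_image] at hy
          rcases hy with ⟨j, hj, rfl⟩ | hy
          · rw [Finset.mem_union] at hj
            rcases hj with hj | hj
            · rw [hNK, Finset.mem_filter] at hj
              obtain ⟨-, -, i, hiK', hd⟩ := hj
              refine ⟨Sum.inl i, ?_, Or.inr (Or.inr hd)⟩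
              rw [hK', Finset.mem_filter] at hiK'
              exact hiK'.2
            · rw [Finset.mem_singleton] at hj
              exact ⟨Sum.inl i₀, hi₀K, Or.inr (Or.inl hj)⟩
          · rw [Finset.mem_singleton] at hy
            subst hy
            exact ⟨Sum.inl i₀, hi₀K, trivial⟩
        have hlast_not : Fin.last N ∉ NK := by
          rw [hNK, Finset.mem_filter]
          rintro ⟨-, h, -⟩
          exact h rfl
        have hTgt_sum : ∑ y ∈ Tgt, qh y = (∑ j ∈ NK, qr j + qr (Fin.last N)) + t := by
          rw [hTgt, Finset.sum_union (by simp), Finset.sum_image (fun a _ b _ h => Sum.inl_injective h),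
            Finset.sum_union (Finset.disjoint_singleton_right.mpr hlast_not)]
          simp [hqh]
        calc ∑ x ∈ K, ph x = (P U).toReal := hLHS
          _ ≤ (Q (thickening t U)).toReal + t := hPU
          _ ≤ (∑ j ∈ NK, qr j + qr (Fin.last N)) + t := by linarith
          _ = ∑ y ∈ Tgt, qh y := hTgt_sum.symm
          _ ≤ ∑ y ∈ Finset.univ.filter (fun y => ∃ x ∈ K, Rh x y), qh y :=
            Finset.sum_le_sum_of_subset_of_nonneg hTgt_sub (fun y _ _ => hqh0 y)
  -- approximate flow on the extended vertex set
  obtain ⟨m, hmnn, hmsupp, hmrow, hmcol, hmtot⟩ :=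
    approx_flow ph qh Rh hph0 hqh0 hall (θ := η) hη0
  set m0 : Fin (N+1) → Fin (N+1) → ℝ := fun i j => m (Sum.inl i) (Sum.inl j) with hm0def
  have hm00 : ∀ i j, 0 ≤ m0 i j := fun i j => hmnn _ _
  have hm0supp : ∀ i j, ¬ Rc i j → m0 i j = 0 := by
    intro i j h
    exact hmsupp _ _ h
  have hm0row : ∀ i, ∑ j, m0 i j ≤ pr i := by
    intro i
    have h1 : ∑ y, m (Sum.inl i) y ≤ ph (Sum.inl i) := hmrow _
    rw [Fintype.sum_sum_type] at h1
    have h2 : 0 ≤ ∑ u : Unit, m (Sum.inl i) (Sum.inr u) :=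
      Finset.sum_nonneg fun u _ => hmnn _ _
    simp only [hph, Sum.elim_inl] at h1
    linarith
  have hm0col : ∀ j, ∑ i, m0 i j ≤ qr j := by
    intro j
    have h1 : ∑ x, m x (Sum.inl j) ≤ qh (Sum.inl j) := hmcol _
    rw [Fintype.sum_sum_type] at h1
    have h2 : 0 ≤ ∑ u : Unit, m (Sum.inr u) (Sum.inl j) :=
      Finset.sum_nonneg fun u _ => hmnn _ _
    simp only [hqh, Sum.elim_inl] at h1
    linarith
  have hm0tot : (∑ i, pr i) - (t + η) ≤ ∑ i, ∑ j, m0 i j := by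
    have htot : 1 + t - η ≤ ∑ x, ∑ y, m x y := by rw [← hsumph]; exact hmtot
    have hsplit : ∑ x, ∑ y, m x y = (∑ i, ∑ j, m0 i j) +
        ((∑ i, ∑ u : Unit, m (Sum.inl i) (Sum.inr u)) + (∑ u : Unit, ∑ y, m (Sum.inr u) y)) := by
      rw [Fintype.sum_sum_type]
      have : ∀ i : Fin (N+1), ∑ y, m (Sum.inl i) y =
          (∑ j, m0 i j) + ∑ u : Unit, m (Sum.inl i) (Sum.inr u) := by
        intro i; rw [Fintype.sum_sum_type]
      rw [Finset.sum_congr rfl (fun i _ => this i), Finset.sum_add_distrib]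
      ring
    have hb1 : ∑ i, ∑ u : Unit, m (Sum.inl i) (Sum.inr u) ≤ t := by
      have h1 : ∑ x, m x (Sum.inr ()) ≤ qh (Sum.inr ()) := hmcol _
      rw [Fintype.sum_sum_type] at h1
      simp only [hqh, Sum.elim_inr] at h1
      have h2 : 0 ≤ ∑ u : Unit, m (Sum.inr u) (Sum.inr ()) :=
        Finset.sum_nonneg fun u _ => hmnn _ _
      have h3 : ∑ i, ∑ u : Unit, m (Sum.inl i) (Sum.inr u) = ∑ i, m (Sum.inl i) (Sum.inr ()) := by
        refine Finset.sum_congr rfl fun i _ => ?_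
        simp
      rw [h3]
      linarith
    have hb2 : ∑ u : Unit, ∑ y, m (Sum.inr u) y ≤ t := by
      have h1 : ∑ y, m (Sum.inr ()) y ≤ ph (Sum.inr ()) := hmrow _
      simp only [hph, Sum.elim_inr] at h1
      simpa using h1
    rw [hprsum]
    linarith
  obtain ⟨M, hM0, hMrow, hMcol, hMbad⟩ :=
    exact_flow pr qr Rc hpr0 hqr0 (hprsum.trans hqrsum.symm) m0 hm00 hm0supp hm0row hm0col hm0tot
  -- the geometrically good pairs
  set Good : Fin (N+1) → Fin (N+1) → Prop :=
    fun i j => i ≠ Fin.last N ∧ j ≠ Fin.last N ∧ dist (z i) (z j) ≤ t + 2*ρ with hGood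
  have hbadsum : ∑ i, ∑ j, (if Good i j then 0 else M i j) ≤
      (t + η) + (pr (Fin.last N) + qr (Fin.last N)) := by
    have hpt : ∀ i j, (if Good i j then 0 else M i j) ≤ (if Rc i j then 0 else M i j) +
        ((if i = Fin.last N then M i j else 0) + (if j = Fin.last N then M i j else 0)) := by
      intro i j
      have hnn := hM0 i j
      by_cases hg : Good i j
      · rw [if_pos hg]; split_ifs <;> linarith
      · rw [if_neg hg]
        by_cases hi : i = Fin.last N
        · rw [if_pos hi]; split_ifs <;> linarith
        · by_cases hj : j = Fin.last N
          · rw [if_pos hj]; split_ifs <;> linarith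
          · have hnear : ¬ dist (z i) (z j) ≤ t + 2*ρ := fun h => hg ⟨hi, hj, h⟩
            have hrc : ¬ Rc i j := by
              simp only [hRc]; push_neg; exact ⟨hi, hj, lt_of_not_ge hnear⟩
            rw [if_neg hrc]; split_ifs <;> linarith
    have h1 : ∑ i, ∑ j, (if Good i j then 0 else M i j) ≤
        (∑ i, ∑ j, (if Rc i j then 0 else M i j)) +
        ((∑ i, ∑ j, (if i = Fin.last N then M i j else 0)) +
          (∑ i, ∑ j, (if j = Fin.last N then M i j else 0))) := by
      rw [← Finset.sum_add_distrib]
      rw [← Finset.sum_add_distrib]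
      refine Finset.sum_le_sum fun i _ => ?_
      rw [← Finset.sum_add_distrib, ← Finset.sum_add_distrib]
      exact Finset.sum_le_sum fun j _ => hpt i j
    have h2 : ∑ i, ∑ j, (if i = Fin.last N then M i j else 0) = pr (Fin.last N) := by
      have : ∀ i : Fin (N+1), ∑ j, (if i = Fin.last N then M i j else 0) =
          (if i = Fin.last N then pr (Fin.last N) else 0) := by
        intro i
        split_ifs with h
        · subst h; exact hMrow _
        · simp
      rw [Finset.sum_congr rfl (fun i _ => this i), Finset.sum_ite_eq' Finset.univ (Fin.last N)]
      simp
    have h3 : ∑ i, ∑ j, (if j = Fin.last N then M i j else 0) = qr (Fin.last N) := by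
      rw [Finset.sum_comm]
      have : ∀ j : Fin (N+1), ∑ i, (if j = Fin.last N then M i j else 0) =
          (if j = Fin.last N then qr (Fin.last N) else 0) := by
        intro j
        split_ifs with h
        · subst h; exact hMcol _
        · simp
      rw [Finset.sum_congr rfl (fun j _ => this j), Finset.sum_ite_eq' Finset.univ (Fin.last N)]
      simp
    rw [h2, h3] at h1
    linarith
  -- size of the garbage cell
  have hprlast : pr (Fin.last N) ≤ η := by
    have h1 : P ((A N)ᶜ) ≤ ENNReal.ofReal η := by
      rw [measure_compl (hAmeas N) (measure_ne_top P _), measure_univ]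
      rw [tsub_le_iff_right]
      rw [tsub_le_iff_right] at hPN
      rwa [add_comm] at hPN
    have h2 := ENNReal.toReal_mono ENNReal.ofReal_ne_top h1
    rw [ENNReal.toReal_ofReal hη0.le] at h2
    rw [hpr]
    simp only [hClast]
    exact h2
  have hqrlast : qr (Fin.last N) ≤ η := by
    have h1 : Q ((A N)ᶜ) ≤ ENNReal.ofReal η := by
      rw [measure_compl (hAmeas N) (measure_ne_top Q _), measure_univ]
      rw [tsub_le_iff_right]
      rw [tsub_le_iff_right] at hQN
      rwa [add_comm] at hQN
    have h2 := ENNReal.toReal_mono ENNReal.ofReal_ne_top h1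
    rw [ENNReal.toReal_ofReal hη0.le] at h2
    rw [hqr]
    simp only [hClast]
    exact h2
  -- zero rows/columns
  have hMzeroP : ∀ i, P (C i) = 0 → ∀ j, M i j = 0 := by
    intro i hPi j
    have h1 : ∑ j, M i j = 0 := by
      rw [hMrow i, hpr]
      simp [hPi]
    exact (Finset.sum_eq_zero_iff_of_nonneg (fun j _ => hM0 i j)).mp h1 j (Finset.mem_univ j)
  have hMzeroQ : ∀ j, Q (C j) = 0 → ∀ i, M i j = 0 := by
    intro j hQj i
    have h1 : ∑ i, M i j = 0 := by
      rw [hMcol j, hqr]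
      simp [hQj]
    exact (Finset.sum_eq_zero_iff_of_nonneg (fun i _ => hM0 i j)).mp h1 i (Finset.mem_univ i)
  -- the coupling measure
  set κ : Fin (N+1) → Fin (N+1) → ℝ≥0∞ :=
    fun i j => ENNReal.ofReal (M i j) / (P (C i) * Q (C j)) with hκ
  set μ : Measure (S × S) :=
    ∑ i, ∑ j, κ i j • ((P.restrict (C i)).prod (Q.restrict (C j))) with hμ
  have happly : ∀ E : Set (S × S),
      μ E = ∑ i, ∑ j, κ i j * ((P.restrict (C i)).prod (Q.restrict (C j)) E) := by
    intro E
    rw [hμ, Measure.finset_sum_apply]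
    refine Finset.sum_congr rfl fun i _ => ?_
    rw [Measure.finset_sum_apply]
    refine Finset.sum_congr rfl fun j _ => ?_
    rw [Measure.smul_apply, smul_eq_mul]
  -- row sums of κ
  have hrowκ : ∀ i, P (C i) ≠ 0 → ∑ j, κ i j * Q (C j) = 1 := by
    intro i hPi
    have hterm : ∀ j, κ i j * Q (C j) = ENNReal.ofReal (M i j) / P (C i) := by
      intro j
      by_cases hQj : Q (C j) = 0
      · rw [hQj, mul_zero, hMzeroQ j hQj i]
        simp
      · rw [hκ]
        simp only
        rw [div_eq_mul_inv, ENNReal.mul_inv (Or.inl hPi) (Or.inl (measure_ne_top P _)),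
          mul_assoc, mul_assoc, ENNReal.inv_mul_cancel hQj (measure_ne_top Q _), mul_one,
          div_eq_mul_inv]
    rw [Finset.sum_congr rfl (fun j _ => hterm j)]
    have h1 : ∑ j, ENNReal.ofReal (M i j) / P (C i) = (∑ j, ENNReal.ofReal (M i j)) / P (C i) := by
      simp only [div_eq_mul_inv]
      rw [Finset.sum_mul]
    rw [h1, ← ENNReal.ofReal_sum_of_nonneg (fun j _ => hM0 i j), hMrow i, hpr]
    simp only
    rw [ENNReal.ofReal_toReal (measure_ne_top P _)]
    exact ENNReal.div_self hPi (measure_ne_top P _)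
  have hcolκ : ∀ j, Q (C j) ≠ 0 → ∑ i, κ i j * P (C i) = 1 := by
    intro j hQj
    have hterm : ∀ i, κ i j * P (C i) = ENNReal.ofReal (M i j) / Q (C j) := by
      intro i
      by_cases hPi : P (C i) = 0
      · rw [hPi, mul_zero, hMzeroP i hPi j]
        simp
      · rw [hκ]
        simp only
        rw [div_eq_mul_inv, ENNReal.mul_inv (Or.inl hPi) (Or.inl (measure_ne_top P _)),
          mul_comm (P (C i))⁻¹ (Q (C j))⁻¹, mul_assoc, mul_assoc,
          ENNReal.inv_mul_cancel hPi (measure_ne_top P _), mul_one, div_eq_mul_inv]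
    rw [Finset.sum_congr rfl (fun i _ => hterm i)]
    have h1 : ∑ i, ENNReal.ofReal (M i j) / Q (C j) = (∑ i, ENNReal.ofReal (M i j)) / Q (C j) := by
      simp only [div_eq_mul_inv]
      rw [Finset.sum_mul]
    rw [h1, ← ENNReal.ofReal_sum_of_nonneg (fun i _ => hM0 i j), hMcol j, hqr]
    simp only
    rw [ENNReal.ofReal_toReal (measure_ne_top Q _)]
    exact ENNReal.div_self hQj (measure_ne_top Q _)
  -- partition identity
  have hpart : ∀ (μ' : Measure S) (E : Set S), MeasurableSet E → ∑ i, μ' (E ∩ C i) = μ' E := by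
    intro μ' E hE
    have h1 : (⋃ i, E ∩ C i) = E := by
      rw [← Set.inter_iUnion, hCcover, Set.inter_univ]
    have h2 : μ' (⋃ i, E ∩ C i) = ∑' i, μ' (E ∩ C i) := by
      refine measure_iUnion ?_ (fun i => hE.inter (hCmeas i))
      intro i j hij
      exact ((hCdisj hij).mono (Set.inter_subset_right) (Set.inter_subset_right))
    rw [h1] at h2
    rw [h2, tsum_fintype]
  -- first marginal
  have hmarg1 : μ.map Prod.fst = P := by
    refine Measure.ext fun E hE => ?_
    rw [Measure.map_apply measurable_fst hE, happly]
    have hterm : ∀ i j, κ i j * ((P.restrict (C i)).prod (Q.restrict (C j)) (Prod.fst ⁻¹' E)) =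
        (κ i j * Q (C j)) * P (E ∩ C i) := by
      intro i j
      rw [← Set.prod_univ, Measure.prod_prod, Measure.restrict_apply hE,
        Measure.restrict_apply_univ]
      ring
    rw [Finset.sum_congr rfl (fun i _ => Finset.sum_congr rfl (fun j _ => hterm i j))]
    have hinner : ∀ i, ∑ j, (κ i j * Q (C j)) * P (E ∩ C i) = P (E ∩ C i) := by
      intro i
      by_cases hPi : P (C i) = 0
      · have hE0 : P (E ∩ C i) = 0 := measure_mono_null Set.inter_subset_right hPi
        simp [hE0]
      · rw [← Finset.sum_mul, hrowκ i hPi, one_mul]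
    rw [Finset.sum_congr rfl (fun i _ => hinner i)]
    exact hpart P E hE
  -- second marginal
  have hmarg2 : μ.map Prod.snd = Q := by
    refine Measure.ext fun E hE => ?_
    rw [Measure.map_apply measurable_snd hE, happly]
    have hterm : ∀ i j, κ i j * ((P.restrict (C i)).prod (Q.restrict (C j)) (Prod.snd ⁻¹' E)) =
        (κ i j * P (C i)) * Q (E ∩ C j) := by
      intro i j
      rw [← Set.univ_prod, Measure.prod_prod, Measure.restrict_apply hE,
        Measure.restrict_apply_univ]
      ring
    rw [Finset.sum_congr rfl (fun i _ => Finset.sum_congr rfl (fun j _ => hterm i j))]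
    rw [Finset.sum_comm]
    have hinner : ∀ j, ∑ i, (κ i j * P (C i)) * Q (E ∩ C j) = Q (E ∩ C j) := by
      intro j
      by_cases hQj : Q (C j) = 0
      · have hE0 : Q (E ∩ C j) = 0 := measure_mono_null Set.inter_subset_right hQj
        simp [hE0]
      · rw [← Finset.sum_mul, hcolκ j hQj, one_mul]
    rw [Finset.sum_congr rfl (fun j _ => hinner j)]
    exact hpart Q E hE
  have hprob : IsProbabilityMeasure μ := by
    constructor
    have h1 : μ.map Prod.fst Set.univ = P Set.univ := by rw [hmarg1]
    rw [Measure.map_apply measurable_fst MeasurableSet.univ, Set.preimage_univ] at h1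
    rw [h1, measure_univ]
  -- the bad set
  have hbad_meas : MeasurableSet {p : S × S | α + δ ≤ dist p.1 p.2} :=
    (isClosed_le continuous_const (continuous_fst.dist continuous_snd)).measurableSet
  have hbound : μ {p : S × S | α + δ ≤ dist p.1 p.2} ≤ ENNReal.ofReal (α + δ) := by
    rw [happly]
    have hterm : ∀ i j, κ i j * ((P.restrict (C i)).prod (Q.restrict (C j))
        {p : S × S | α + δ ≤ dist p.1 p.2}) ≤ ENNReal.ofReal (if Good i j then 0 else M i j) := by
      intro i j
      by_cases hg : Good i j
      · rw [if_pos hg]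
        have hzero : (P.restrict (C i)).prod (Q.restrict (C j))
            {p : S × S | α + δ ≤ dist p.1 p.2} = 0 := by
          rw [Measure.prod_restrict, Measure.restrict_apply hbad_meas]
          have hempty : {p : S × S | α + δ ≤ dist p.1 p.2} ∩ (C i) ×ˢ (C j) = ∅ := by
            rw [Set.eq_empty_iff_forall_notMem]
            rintro ⟨x, y⟩ ⟨hxy, hx, hy⟩
            obtain ⟨hi, hj, hdist⟩ := hg
            have hx' : x ∈ closedBall (z i) ρ := hDsub i (by rwa [hCD i hi] at hx)
            have hy' : y ∈ closedBall (z j) ρ := hDsub j (by rwa [hCD j hj] at hy)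
            have h1 : dist x (z (i:ℕ)) ≤ ρ := mem_closedBall.mp hx'
            have h2 : dist (z (j:ℕ)) y ≤ ρ := by rw [dist_comm]; exact mem_closedBall.mp hy'
            have h3 : dist x y ≤ ρ + (t + 2*ρ) + ρ := by
              calc dist x y ≤ dist x (z (i:ℕ)) + dist (z (i:ℕ)) (z (j:ℕ)) + dist (z (j:ℕ)) y :=
                    dist_triangle4 _ _ _ _
                _ ≤ ρ + (t + 2*ρ) + ρ := by linarith
            have hxy' : α + δ ≤ dist x y := hxy
            rw [htdef, hρdef] at h3
            linarith
          rw [hempty, measure_empty]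
        rw [hzero, mul_zero]
        exact zero_le
      · rw [if_neg hg]
        have h1 : (P.restrict (C i)).prod (Q.restrict (C j))
            {p : S × S | α + δ ≤ dist p.1 p.2} ≤ P (C i) * Q (C j) := by
          refine (measure_mono (Set.subset_univ _)).trans ?_
          rw [← Set.univ_prod_univ, Measure.prod_prod, Measure.restrict_apply_univ,
            Measure.restrict_apply_univ]
        calc κ i j * _ ≤ κ i j * (P (C i) * Q (C j)) := mul_le_mul_right h1 _
          _ ≤ ENNReal.ofReal (M i j) := by
            rw [hκ]
            simp only
            by_cases hab : P (C i) * Q (C j) = 0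
            · rw [hab, mul_zero]
              exact zero_le
            · rw [ENNReal.div_mul_cancel hab
                (ENNReal.mul_ne_top (measure_ne_top P _) (measure_ne_top Q _))]
    calc ∑ i, ∑ j, κ i j * ((P.restrict (C i)).prod (Q.restrict (C j))
          {p : S × S | α + δ ≤ dist p.1 p.2})
        ≤ ∑ i, ∑ j, ENNReal.ofReal (if Good i j then 0 else M i j) :=
          Finset.sum_le_sum fun i _ => Finset.sum_le_sum fun j _ => hterm i j
      _ = ENNReal.ofReal (∑ i, ∑ j, (if Good i j then 0 else M i j)) := by
          rw [ENNReal.ofReal_sum_of_nonneg (fun i _ => Finset.sum_nonneg fun j _ => by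
            split_ifs; exacts [le_refl 0, hM0 i j])]
          refine Finset.sum_congr rfl fun i _ => ?_
          rw [ENNReal.ofReal_sum_of_nonneg (fun j _ => by
            split_ifs; exacts [le_refl 0, hM0 i j])]
      _ ≤ ENNReal.ofReal (α + δ) := by
          refine ENNReal.ofReal_le_ofReal ?_
          have h5 : t + η + (pr (Fin.last N) + qr (Fin.last N)) ≤ α + δ := by
            rw [htdef, hηdef]
            linarith
          linarith [hbadsum]
  exact ⟨μ, hprob, hmarg1, hmarg2, hbound⟩

end StrassenAux

theorem stmt1 {S : Type*} [MeasurableSpace S] [MetricSpace S] [BorelSpace S]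
    [TopologicalSpace.SeparableSpace S]
    (P Q : Measure S) [IsProbabilityMeasure P] [IsProbabilityMeasure Q] :
    levyProkhorovDist P Q =
      sInf {r : ℝ | ∃ μ : Measure (S × S), IsProbabilityMeasure μ ∧
        μ.map Prod.fst = P ∧ μ.map Prod.snd = Q ∧
        r = sInf {ε : ℝ | 0 < ε ∧ (μ {p : S × S | ε ≤ dist p.1 p.2}).toReal ≤ ε}} := by
  classical
  have hlb : ∀ r ∈ {r : ℝ | ∃ μ : Measure (S × S), IsProbabilityMeasure μ ∧
      μ.map Prod.fst = P ∧ μ.map Prod.snd = Q ∧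
      r = sInf {ε : ℝ | 0 < ε ∧ (μ {p : S × S | ε ≤ dist p.1 p.2}).toReal ≤ ε}},
      levyProkhorovDist P Q ≤ r := by
    rintro r ⟨μ, hμ, h1, h2, rfl⟩
    exact lp_le_kyfan P Q μ hμ h1 h2
  have hTne : {r : ℝ | ∃ μ : Measure (S × S), IsProbabilityMeasure μ ∧
      μ.map Prod.fst = P ∧ μ.map Prod.snd = Q ∧
      r = sInf {ε : ℝ | 0 < ε ∧ (μ {p : S × S | ε ≤ dist p.1 p.2}).toReal ≤ ε}}.Nonempty := by
    refine ⟨_, P.prod Q, inferInstance, ?_, ?_, rfl⟩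
    · rw [Measure.map_fst_prod]; simp
    · rw [Measure.map_snd_prod]; simp
  have hTbdd : BddBelow {r : ℝ | ∃ μ : Measure (S × S), IsProbabilityMeasure μ ∧
      μ.map Prod.fst = P ∧ μ.map Prod.snd = Q ∧
      r = sInf {ε : ℝ | 0 < ε ∧ (μ {p : S × S | ε ≤ dist p.1 p.2}).toReal ≤ ε}} := by
    refine ⟨0, ?_⟩
    rintro r ⟨μ, hμ, h1, h2, rfl⟩
    exact Real.sInf_nonneg (fun x hx => hx.1.le)
  refine le_antisymm (le_csInf hTne hlb) ?_
  have hα0 : 0 ≤ levyProkhorovDist P Q := ENNReal.toReal_nonneg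
  refine le_of_forall_pos_le_add ?_
  intro δ hδ
  obtain ⟨μ, hμ, h1, h2, hbound⟩ := exists_good_coupling P Q hδ
  have hmem : sInf {ε : ℝ | 0 < ε ∧ (μ {p : S × S | ε ≤ dist p.1 p.2}).toReal ≤ ε} ∈
      {r : ℝ | ∃ μ : Measure (S × S), IsProbabilityMeasure μ ∧
        μ.map Prod.fst = P ∧ μ.map Prod.snd = Q ∧
        r = sInf {ε : ℝ | 0 < ε ∧ (μ {p : S × S | ε ≤ dist p.1 p.2}).toReal ≤ ε}} :=
    ⟨μ, hμ, h1, h2, rfl⟩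
  refine (csInf_le hTbdd hmem).trans ?_
  refine csInf_le ⟨0, fun x hx => hx.1.le⟩ ?_
  refine ⟨by linarith, ?_⟩
  have h3 := ENNReal.toReal_mono ENNReal.ofReal_ne_top hbound
  rwa [ENNReal.toReal_ofReal (by linarith)] at h3
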